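/- Pump-up lemma for star networks: if C is a b-configuration of a 1-phase-bounded protocol reachable from some initial star configuration, with broadcast-print (q, Λ), then for every N ∈ ℕ there exists an initial star configuration C'_in and a reachable b-configuration C' with the same broadcast-print (q, Λ) such that for every q' ∈ Λ, at least N non-root vertices of C' are in state q'. -/

import Mathlib

namespace BN

/-- Actions of a broadcast protocol: broadcast `!!m`, reception `?m`, internal `τ`. -/
inductive Act (M : Type) : Type where
  | brd : M → Act M
  | rcv : M → Act M
  | tau : Act M

/-- A broadcast protocol: an initial state and a set of transitions. -/
structure Protocol (Q M : Type) : Type where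
  qin : Q
  delta : Set (Q × Act M × Q)

variable {Q M V : Type}

/-- `q` has an outgoing reception of `m`. -/
def canRecv (P : Protocol Q M) (q : Q) (m : M) : Prop :=
  ∃ q', (q, Act.rcv m, q') ∈ P.delta

/-- One step of the broadcast network semantics over topology `G`,
performed by vertex `v` taking transition `t`. -/
def Step (G : SimpleGraph V) (P : Protocol Q M) (v : V)
    (t : Q × Act M × Q) (L L' : V → Q) : Prop :=
  t ∈ P.delta ∧ L v = t.1 ∧ L' v = t.2.2 ∧
  (match t.2.1 with
   | Act.tau => ∀ u, u ≠ v → L' u = L u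
   | Act.brd m =>
       (∀ u, G.Adj v u →
          ((L u, Act.rcv m, L' u) ∈ P.delta ∨ (¬ canRecv P (L u) m ∧ L' u = L u))) ∧
       (∀ u, u ≠ v → ¬ G.Adj v u → L' u = L u)
   | Act.rcv _ => False)

def StepAny (G : SimpleGraph V) (P : Protocol Q M) (L L' : V → Q) : Prop :=
  ∃ v t, Step G P v t L L'

def Reach (G : SimpleGraph V) (P : Protocol Q M) : (V → Q) → (V → Q) → Prop :=
  Relation.ReflTransGen (StepAny G P)

def initConf (P : Protocol Q M) : V → Q := fun _ => P.qin

/-- `qf` is coverable over the class of all (finite) graph topologies. -/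
def Coverable (P : Protocol Q M) (qf : Q) : Prop :=
  ∃ (V' : Type) (_ : Fintype V') (G : SimpleGraph V') (L : V' → Q),
    Reach G P (initConf P) L ∧ ∃ v, L v = qf

/-- A tree topology: a prefix-closed finite set of words over ℕ containing ε. -/
structure TreeTopo : Type where
  verts : Finset (List ℕ)
  nil_mem : ([] : List ℕ) ∈ verts
  prefixClosed : ∀ w ∈ verts, ∀ w' : List ℕ, w' <+: w → w' ∈ verts

abbrev TreeTopo.Vert (T : TreeTopo) : Type := {w : List ℕ // w ∈ T.verts}

def TreeTopo.root (T : TreeTopo) : T.Vert := ⟨[], T.nil_mem⟩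

/-- The graph of a tree topology: each word `w ++ [x]` is adjacent to its parent `w`. -/
def TreeTopo.graph (T : TreeTopo) : SimpleGraph T.Vert where
  Adj u v := (∃ x : ℕ, (v : List ℕ) = (u : List ℕ) ++ [x]) ∨
             (∃ x : ℕ, (u : List ℕ) = (v : List ℕ) ++ [x])
  symm := by constructor; intro u v h; exact h.symm
  loopless := by
    constructor; intro u h
    rcases h with ⟨x, hx⟩ | ⟨x, hx⟩ <;> simpa using congrArg List.length hx

def CoverableWith (T : TreeTopo) (P : Protocol Q M) (qf : Q) : Prop :=
  ∃ L : T.Vert → Q, Reach T.graph P (initConf P) L ∧ ∃ u, L u = qf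

def CoverableTreeRoot (P : Protocol Q M) (qf : Q) : Prop :=
  ∃ (T : TreeTopo) (L : T.Vert → Q),
    Reach T.graph P (initConf P) L ∧ L T.root = qf

/-- `(T, lam)` is the unfolding of graph `G` at vertex `v` to depth `n`. -/
structure IsUnfolding {V : Type} (G : SimpleGraph V) (v : V) (n : ℕ)
    (T : TreeTopo) (lam : T.Vert → V) : Prop where
  root_lbl : lam T.root = v
  depth_le : ∀ w ∈ T.verts, w.length ≤ n
  root_children :
    Set.BijOn lam {u : T.Vert | ∃ x : ℕ, (u : List ℕ) = [x]} (G.neighborSet v)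
  children : ∀ (u : T.Vert) (w : List ℕ) (hw : w ∈ T.verts) (x : ℕ),
      (u : List ℕ) = w ++ [x] → (u : List ℕ).length < n →
      Set.BijOn lam {u' : T.Vert | ∃ y : ℕ, (u' : List ℕ) = (u : List ℕ) ++ [y]}
        (G.neighborSet (lam u) \ {lam ⟨w, hw⟩})
  no_deep : ∀ u : T.Vert, n ≤ (u : List ℕ).length →
      ∀ x : ℕ, (u : List ℕ) ++ [x] ∉ T.verts

/-- Phase tags annotating states: `zero` (phase 0), broadcast phase `j`, reception phase `j`. -/
inductive PTag : Type where
  | zero : PTag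
  | bph : ℕ → PTag
  | rph : ℕ → PTag
deriving DecidableEq

def bOf : ℕ → PTag
  | 0 => .zero
  | j+1 => .bph (j+1)

def rOf : ℕ → PTag
  | 0 => .zero
  | j+1 => .rph (j+1)

/-- `φ` witnesses that `P` is `k`-phase-bounded. -/
def IsPhaseAssignment (k : ℕ) (P : Protocol Q M) (φ : Q → PTag) : Prop :=
  φ P.qin = .zero ∧
  (∀ q : Q, φ q = .zero ∨ ∃ j, 1 ≤ j ∧ j ≤ k ∧ (φ q = .bph j ∨ φ q = .rph j)) ∧
  ∀ t ∈ P.delta,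
    (match t.2.1 with
     | Act.tau => φ t.1 = φ t.2.2
     | Act.brd _ =>
         (∃ j, 1 ≤ j ∧ j ≤ k ∧ φ t.1 = .bph j ∧ φ t.2.2 = .bph j) ∨
         (∃ i, i < k ∧ φ t.1 = rOf i ∧ φ t.2.2 = .bph (i+1))
     | Act.rcv _ =>
         (∃ j, 1 ≤ j ∧ j ≤ k ∧ φ t.1 = .rph j ∧ φ t.2.2 = .rph j) ∨
         (∃ i, i < k ∧ φ t.1 = bOf i ∧ φ t.2.2 = .rph (i+1)) ∨
         (1 ≤ k ∧ φ t.1 = .bph k ∧ φ t.2.2 = .rph k))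

def IsPhaseBounded (k : ℕ) (P : Protocol Q M) : Prop :=
  ∃ φ : Q → PTag, IsPhaseAssignment k P φ

/-- The `k`-unfolding `Pₖ` of a protocol `P`. -/
def unfoldP (P : Protocol Q M) (k : ℕ) : Protocol (Q × PTag) M where
  qin := (P.qin, .zero)
  delta :=
    {t | ∃ q p, (q, Act.tau, p) ∈ P.delta ∧ t = ((q, .zero), Act.tau, (p, .zero))} ∪
    {t | ∃ q p α j, 1 ≤ j ∧ j ≤ k ∧ (q, α, p) ∈ P.delta ∧
        (α = Act.tau ∨ ∃ m, α = Act.rcv m) ∧ t = ((q, .rph j), α, (p, .rph j))} ∪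
    {t | ∃ q p α j, 1 ≤ j ∧ j ≤ k ∧ (q, α, p) ∈ P.delta ∧
        (α = Act.tau ∨ ∃ m, α = Act.brd m) ∧ t = ((q, .bph j), α, (p, .bph j))} ∪
    {t | ∃ q p m j, j < k ∧ (q, Act.brd m, p) ∈ P.delta ∧
        t = ((q, rOf j), Act.brd m, (p, .bph (j+1)))} ∪
    {t | ∃ q p m j, j < k ∧ (q, Act.rcv m, p) ∈ P.delta ∧
        t = ((q, bOf j), Act.rcv m, (p, .rph (j+1)))} ∪
    {t | ∃ q p m, 1 ≤ k ∧ (q, Act.rcv m, p) ∈ P.delta ∧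
        t = ((q, .bph k), Act.rcv m, (p, .rph k))}

/-- Star topology: root `none` adjacent to every leaf `some i`, no other edges. -/
def starGraph (ι : Type) : SimpleGraph (Option ι) where
  Adj u v := (u = none ∧ v ≠ none) ∨ (v = none ∧ u ≠ none)
  symm := by constructor; intro u v h; tauto
  loopless := by constructor; intro u h; tauto

/-- For a 1-phase-bounded protocol with witness `φ`, `Q^b = Q₀ ∪ Q₁^b`. -/
def Qb (φ : Q → PTag) : Set Q := {q | φ q = .zero ∨ φ q = .bph 1}

/-- The set component of the broadcast-print of a star configuration. -/
def bprintSet {ι : Type} (φ : Q → PTag) (L : Option ι → Q) : Set Q :=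
  {q | q ∈ Qb φ ∧ ∃ i, L (some i) = q}

/-- The abstract transition relation `⇒` on broadcast-prints. -/
def PrintStep (P : Protocol Q M) (φ : Q → PTag) :
    (Q × Set Q) → (Q × Set Q) → Prop := fun pr pr' =>
  ∃ (ι : Type) (_ : Fintype ι) (L L' : Option ι → Q),
    StepAny (starGraph ι) P L L' ∧ L none ∈ Qb φ ∧ L' none ∈ Qb φ ∧
    pr = (L none, bprintSet φ L) ∧ pr' = (L' none, bprintSet φ L')

/-- Line topology on `Fin ℓ`: consecutive vertices are adjacent. -/
def lineGraph (ℓ : ℕ) : SimpleGraph (Fin ℓ) where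
  Adj i j := (i : ℕ) + 1 = (j : ℕ) ∨ (j : ℕ) + 1 = (i : ℕ)
  symm := by constructor; intro i j h; tauto
  loopless := by constructor; intro i h; rcases h with h | h <;> omega

/-- `t` is a broadcast transition. -/
def IsBrdT (t : Q × Act M × Q) : Prop := ∃ m, t.2.1 = Act.brd m

/-- In the execution described by `vs, ts` of length `n`, `i` is the first index at
which vertex `u` performs a broadcast. -/
def IsFirstBrd {V' : Type} (vs : ℕ → V') (ts : ℕ → Q × Act M × Q) (n : ℕ)
    (u : V') (i : ℕ) : Prop :=
  i < n ∧ vs i = u ∧ IsBrdT (ts i) ∧ ∀ j < i, vs j = u → ¬ IsBrdT (ts j)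

/-- Every transition of `u` occurs no later than every broadcast of `w`
(i.e. lastBroadcast(u) ≤ firstBroadcast(w)). -/
def BrdOrder {V' : Type} (n : ℕ) (vs : ℕ → V') (ts : ℕ → Q × Act M × Q)
    (u w : V') : Prop :=
  ∀ j j', j < n → j' < n → vs j = u → vs j' = w → IsBrdT (ts j') → j ≤ j'

/-- One application of the pair-coverability operator. -/
def pairStep (P : Protocol Q M) (S : Set (Q × Q)) : Set (Q × Q) :=
  S ∪
  {p | ∃ p₁, (p₁, p.2) ∈ S ∧ (p₁, Act.tau, p.1) ∈ P.delta} ∪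
  {p | ∃ p₂, (p.1, p₂) ∈ S ∧ (p₂, Act.tau, p.2) ∈ P.delta} ∪
  {p | ∃ p₁ p₂ m, (p₁, p₂) ∈ S ∧ (p₂, Act.brd m, p.2) ∈ P.delta ∧
      (p₁, Act.rcv m, p.1) ∈ P.delta} ∪
  {p | ∃ p₂ m, (p.1, p₂) ∈ S ∧ (p₂, Act.brd m, p.2) ∈ P.delta ∧ ¬ canRecv P p.1 m} ∪
  {p | p.1 = P.qin ∧ ∃ q', (p.2, q') ∈ S}

/-- The iteration `S₀ ⊆ S₁ ⊆ …` of the pair-coverability operator. -/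
def Siter (P : Protocol Q M) : ℕ → Set (Q × Q)
  | 0 => {(P.qin, P.qin)}
  | i+1 => pairStep P (Siter P i)


section PumpUp

variable {ι : Type}

/-- Any reception transition of a 1-phase-bounded protocol lands in an `rph` state. -/
lemma rcv_target_rph (P : Protocol Q M) (φ : Q → PTag) (hφ : IsPhaseAssignment 1 P φ)
    {q q' : Q} {m : M} (h : (q, Act.rcv m, q') ∈ P.delta) : ∃ j, φ q' = PTag.rph j := by
  have := hφ.2.2 _ h
  simp only at this
  rcases this with ⟨j, _, _, _, h2⟩ | ⟨i, _, _, h2⟩ | ⟨_, _, h2⟩ <;> exact ⟨_, h2⟩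

lemma Qb_not_rph (φ : Q → PTag) {q : Q} (hq : q ∈ Qb φ) (j : ℕ) : φ q ≠ PTag.rph j := by
  rcases hq with h | h <;> simp [h]

/-- Source of a broadcast transition of a 1-phase-bounded protocol is in `Qb`. -/
lemma brd_source_Qb (P : Protocol Q M) (φ : Q → PTag) (hφ : IsPhaseAssignment 1 P φ)
    {q q' : Q} {m : M} (h : (q, Act.brd m, q') ∈ P.delta) : q ∈ Qb φ := by
  have := hφ.2.2 _ h
  simp only at this
  rcases this with ⟨j, hj1, hj2, h2, _⟩ | ⟨i, hi, h2, _⟩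
  · right; rw [h2]; congr 1; omega
  · left; rw [h2]; interval_cases i; rfl

/-- Copy a star configuration onto `N+1` copies of each leaf. -/
def copyConf (N : ℕ) (L : Option ι → Q) : Option (ι × Fin (N + 1)) → Q :=
  fun u => match u with
  | none => L none
  | some p => L (some p.1)

lemma adj_star_some {κ : Type} (i : κ) (u : Option κ) :
    (starGraph κ).Adj (some i) u ↔ u = none := by
  constructor
  · rintro (⟨h, _⟩ | ⟨h, _⟩)
    · exact absurd h (by simp)
    · exact h
  · rintro rfl; right; simp [starGraph]

lemma adj_star_none {κ : Type} (u : Option κ) :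
    (starGraph κ).Adj none u ↔ u ≠ none := by
  constructor
  · rintro (⟨_, h⟩ | ⟨h, h'⟩)
    · exact h
    · exact absurd rfl h'
  · intro h; left; exact ⟨rfl, h⟩

/-- Replication of a leaf transition on all copies of the leaf. -/
lemma leaf_replicate (P : Protocol Q M) (N : ℕ) (i₀ : ι) (t : Q × Act M × Q)
    (L₁ L₂ : Option ι → Q)
    (ht : t ∈ P.delta) (h1 : L₁ (some i₀) = t.1) (h2 : L₂ (some i₀) = t.2.2)
    (hother : ∀ u, u ≠ some i₀ → L₂ u = L₁ u)
    (hact : t.2.1 = Act.tau ∨ ∃ m, t.2.1 = Act.brd m ∧ ¬ canRecv P (L₁ none) m) :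
    Reach (starGraph (ι × Fin (N + 1))) P (copyConf N L₁) (copyConf N L₂) := by
  classical
  set G : ℕ → (Option (ι × Fin (N + 1)) → Q) := fun s u =>
    match u with
    | none => L₁ none
    | some p => if p.1 = i₀ ∧ (p.2 : ℕ) < s then L₂ (some i₀) else L₁ (some p.1)
    with hG
  have hG0 : G 0 = copyConf N L₁ := by
    funext u
    cases u with
    | none => rfl
    | some p => simp [hG, copyConf]
  have hGK : G (N + 1) = copyConf N L₂ := by
    funext u
    cases u with
    | none => simp [hG, copyConf, hother none (by simp)]
    | some p =>
      by_cases hp : p.1 = i₀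
      · simp [hG, copyConf, hp, p.2.isLt]
      · have : L₂ (some p.1) = L₁ (some p.1) := hother _ (by simp [hp])
        simp [hG, copyConf, hp, this]
  have hstep : ∀ s : ℕ, (hs : s < N + 1) →
      Step (starGraph (ι × Fin (N + 1))) P (some (i₀, ⟨s, hs⟩)) t (G s) (G (s + 1)) := by
    intro s hs
    refine ⟨ht, ?_, ?_, ?_⟩
    · simp [hG, h1]
    · simp [hG, h2]
    · have hunch : ∀ u : Option (ι × Fin (N + 1)), u ≠ some (i₀, ⟨s, hs⟩) →
          G (s + 1) u = G s u := by
        intro u hu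
        cases u with
        | none => rfl
        | some p =>
          by_cases hp : p.1 = i₀
          · have hps : (p.2 : ℕ) ≠ s := by
              intro hc
              apply hu
              have : p = (i₀, ⟨s, hs⟩) := by
                cases p with
                | mk a b => simp_all [Fin.ext_iff]
              rw [this]
            have : ((p.2 : ℕ) < s + 1) ↔ ((p.2 : ℕ) < s) := by omega
            simp [hG, hp, this]
          · simp [hG, hp]
      rcases hact with htau | ⟨m, hbrd, hcr⟩
      · rw [htau]
        exact hunch
      · rw [hbrd]
        refine ⟨?_, fun u hu _ => hunch u hu⟩
        intro u hadj
        rw [adj_star_some] at hadj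
        subst hadj
        right
        exact ⟨hcr, rfl⟩
  have hchain : ∀ s : ℕ, s ≤ N + 1 →
      Reach (starGraph (ι × Fin (N + 1))) P (G 0) (G s) := by
    intro s
    induction s with
    | zero => intro _; exact Relation.ReflTransGen.refl
    | succ n ih =>
      intro hn
      exact Relation.ReflTransGen.tail (ih (by omega))
        ⟨_, _, hstep n (by omega)⟩
  rw [← hG0, ← hGK]
  exact hchain (N + 1) le_rfl

/-- The copied configuration is reachable, provided the root ends in `Qb`. -/
lemma copy_reach (P : Protocol Q M) (φ : Q → PTag) (hφ : IsPhaseAssignment 1 P φ) (N : ℕ)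
    (L : Option ι → Q) (hreach : Reach (starGraph ι) P (initConf P) L) :
    L none ∈ Qb φ →
      Reach (starGraph (ι × Fin (N + 1))) P (initConf P) (copyConf N L) := by
  induction hreach with
  | refl =>
    intro _
    have : copyConf N (initConf P : Option ι → Q) = initConf P := by
      funext u; cases u <;> rfl
    rw [this]
    exact Relation.ReflTransGen.refl
  | @tail b c hb hstep ih =>
    intro hc
    obtain ⟨v, t, ht, hv1, hv2, hmatch⟩ := hstep
    obtain ⟨q1, a, q2⟩ := t
    cases v with
    | none =>
      -- root moves
      cases a with
      | tau =>
        have hQb : b none ∈ Qb φ := by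
          have hphi : φ q1 = φ q2 := hφ.2.2 _ ht
          have : φ (b none) = φ (c none) := by rw [hv1, hv2]; exact hphi
          rcases hc with h | h
          · left; rw [this, h]
          · right; rw [this, h]
        refine Relation.ReflTransGen.tail (ih hQb) ⟨none, (q1, Act.tau, q2), ht, hv1, hv2, ?_⟩
        intro u hu
        cases u with
        | none => exact absurd rfl hu
        | some p => exact hmatch (some p.1) (by simp)
      | brd m =>
        have hQb : b none ∈ Qb φ := by
          rw [hv1]; exact brd_source_Qb P φ hφ ht
        obtain ⟨hadjc, hnadjc⟩ := hmatch
        refine Relation.ReflTransGen.tail (ih hQb)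
          ⟨none, (q1, Act.brd m, q2), ht, hv1, hv2, ?_, ?_⟩
        · intro u hadj
          rw [adj_star_none] at hadj
          match u, hadj with
          | some p, _ => exact hadjc (some p.1) (by rw [adj_star_none]; simp)
        · intro u hu hnadj
          exfalso
          apply hnadj
          rw [adj_star_none]
          exact hu
      | rcv m => exact absurd hmatch (by simp)
    | some i₀ =>
      -- leaf moves
      cases a with
      | tau =>
        have hQb : b none ∈ Qb φ := by
          have := hmatch none (by simp)
          rwa [this] at hc
        exact Relation.ReflTransGen.trans (ih hQb)
          (leaf_replicate P N i₀ (q1, Act.tau, q2) b c ht hv1 hv2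
            (fun u hu => by
              cases u with
              | none => exact hmatch none (by simp)
              | some i => exact hmatch (some i) hu)
            (Or.inl rfl))
      | brd m =>
        obtain ⟨hadjc, hnadjc⟩ := hmatch
        have hroot := hadjc none (by rw [adj_star_some])
        have hroot2 : ¬ canRecv P (b none) m ∧ c none = b none := by
          rcases hroot with hrcv | h
          · exfalso
            obtain ⟨j, hj⟩ := rcv_target_rph P φ hφ hrcv
            exact Qb_not_rph φ hc j hj
          · exact h
        have hQb : b none ∈ Qb φ := by rwa [hroot2.2] at hc
        exact Relation.ReflTransGen.trans (ih hQb)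
          (leaf_replicate P N i₀ (q1, Act.brd m, q2) b c ht hv1 hv2
            (fun u hu => by
              cases u with
              | none => exact hroot2.2
              | some i =>
                exact hnadjc (some i) hu (by rw [adj_star_some]; simp))
            (Or.inr ⟨m, rfl, hroot2.1⟩))
      | rcv m => exact absurd hmatch (by simp)

end PumpUp

/-- pump-up lemma for reachable b-configurations of star networks. -/
theorem star_pump_up {Q M ι : Type} [Fintype ι]
    (P : Protocol Q M) (φ : Q → PTag) (hφ : IsPhaseAssignment 1 P φ)
    (L : Option ι → Q)
    (hreach : Reach (starGraph ι) P (initConf P) L)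
    (hb : L none ∈ Qb φ) (N : ℕ) :
    ∃ (ι' : Type) (_ : Fintype ι') (L' : Option ι' → Q),
      Reach (starGraph ι') P (initConf P) L' ∧
      L' none = L none ∧
      bprintSet φ L' = bprintSet φ L ∧
      ∀ q' ∈ bprintSet φ L, N ≤ Set.ncard {i : ι' | L' (some i) = q'} := by
  refine ⟨ι × Fin (N + 1), inferInstance, copyConf N L,
    copy_reach P φ hφ N L hreach hb, rfl, ?_, ?_⟩
  · ext q
    constructor
    · rintro ⟨hq, p, hp⟩
      exact ⟨hq, p.1, hp⟩
    · rintro ⟨hq, i, hi⟩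
      exact ⟨hq, (i, 0), hi⟩
  · rintro q' ⟨hq, i₀, hi⟩
    have hsub : (fun k : Fin (N + 1) => (i₀, k)) '' Set.univ ⊆
        {i : ι × Fin (N + 1) | copyConf N L (some i) = q'} := by
      rintro p ⟨k, _, rfl⟩
      exact hi
    have hinj : Function.Injective (fun k : Fin (N + 1) => (i₀, k)) := by
      intro a b h
      simpa using h
    have hcard : ((fun k : Fin (N + 1) => (i₀, k)) '' Set.univ).ncard = N + 1 := by
      rw [Set.ncard_image_of_injective _ hinj, Set.ncard_univ]
      simp
    have := Set.ncard_le_ncard hsub (Set.toFinite _)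
    omega

end BN
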